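/- Let τ > 0 be fixed. Then there exists a constant c > 0 (depending only on τ) such that for all real numbers a, b, c', d with 0 < a ≤ b, a ≤ c', b ≤ d, c' ≤ d and a + d = b + c': a^{-τ} − b^{-τ} − c'^{-τ} + d^{-τ} ≥ c · (min(min(b,c') − a, a))² / a^{τ+2}. -/

import Mathlib

open MeasureTheory Real Set
open scoped ENNReal Classical

noncomputable def cab (α β : ℝ) : ℝ :=
  Real.Gamma (α + β + 2) / (2 ^ (α + β + 1) * Real.Gamma (α + 1) * Real.Gamma (β + 1))

noncomputable def F4 (a₁ a₂ b₁ b₂ x y : ℝ) : ℝ :=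
  ∑' p : ℕ × ℕ,
    (Polynomial.eval a₁ (ascPochhammer ℝ (p.1 + p.2)) *
      Polynomial.eval a₂ (ascPochhammer ℝ (p.1 + p.2))) /
    (Polynomial.eval b₁ (ascPochhammer ℝ p.1) * Polynomial.eval b₂ (ascPochhammer ℝ p.2) *
      (Nat.factorial p.1) * (Nat.factorial p.2)) * x ^ p.1 * y ^ p.2

noncomputable def Hker (α β t θ φ : ℝ) : ℝ :=
  cab α β * Real.sinh (t / 2) / Real.cosh (t / 2) ^ (α + β + 2) *
    F4 ((α + β + 2) / 2) ((α + β + 3) / 2) (α + 1) (β + 1)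
      ((Real.sin (θ / 2) * Real.sin (φ / 2) / Real.cosh (t / 2)) ^ 2)
      ((Real.cos (θ / 2) * Real.cos (φ / 2) / Real.cosh (t / 2)) ^ 2)

noncomputable def qf (θ φ u v : ℝ) : ℝ :=
  1 - u * Real.sin (θ / 2) * Real.sin (φ / 2) - v * Real.cos (θ / 2) * Real.cos (φ / 2)

noncomputable def Psi (α β t θ φ u v : ℝ) : ℝ :=
  cab α β * Real.sinh (t / 2) / (Real.cosh (t / 2) - 1 + qf θ φ u v) ^ (α + β + 2)

noncomputable def PsiE (α β t θ φ u v : ℝ) : ℝ :=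
  (Psi α β t θ φ u v + Psi α β t θ φ (-u) v + Psi α β t θ φ u (-v) +
    Psi α β t θ φ (-u) (-v)) / 4

noncomputable def PiMeas (ν : ℝ) : Measure ℝ :=
  if ν = -(1/2) then (2⁻¹ : ℝ≥0∞) • (Measure.dirac (-1) + Measure.dirac 1)
  else (volume.restrict (Icc (-1 : ℝ) 1)).withDensity
    (fun u => ENNReal.ofReal
      (Real.Gamma (ν + 1) / (Real.sqrt π * Real.Gamma (ν + 1/2)) * (1 - u ^ 2) ^ (ν - 1/2)))

noncomputable def PiFun (γ u : ℝ) : ℝ :=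
  Real.Gamma (γ + 1) / (Real.sqrt π * Real.Gamma (γ + 1/2)) *
    ∫ w in (0 : ℝ)..u, (1 - w ^ 2) ^ (γ - 1/2)

noncomputable def PiInt (ν : ℝ) (S : Set ℝ) (f : ℝ → ℝ) : ℝ :=
  if ν = -(1/2) then
    ((if (-1 : ℝ) ∈ S then f (-1) else 0) + (if (1 : ℝ) ∈ S then f 1 else 0)) / 2
  else ∫ u in S, f u *
    (Real.Gamma (ν + 1) / (Real.sqrt π * Real.Gamma (ν + 1/2)) * (1 - u ^ 2) ^ (ν - 1/2))

noncomputable def muab (α β : ℝ) : Measure ℝ :=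
  (volume.restrict (Icc (0 : ℝ) π)).withDensity
    (fun θ => ENNReal.ofReal (Real.sin (θ / 2) ^ (2 * α + 1) * Real.cos (θ / 2) ^ (2 * β + 1)))

def ballI (θ r : ℝ) : Set ℝ := Ioo (θ - r) (θ + r) ∩ Icc 0 π

/-- Tangent line inequality for `x ^ p` with `p ≤ 0`. -/
lemma rpow_tangent_le {p : ℝ} (hp : p ≤ 0) {w x : ℝ} (hw : 0 < w) (hx : 0 < x) :
    w ^ p + p * w ^ (p - 1) * (x - w) ≤ x ^ p := by
  have ht : 0 < x / w := div_pos hx hw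
  have hlog : Real.log (x / w) ≤ x / w - 1 := Real.log_le_sub_one_of_pos ht
  have h1 : 1 + p * (x / w - 1) ≤ (x / w) ^ p := by
    have h2 : p * (x / w - 1) ≤ p * Real.log (x / w) := by
      rcases eq_or_lt_of_le hp with rfl | hp'
      · simp
      · exact (mul_le_mul_left_of_neg hp').mpr hlog
    have h3 : 1 + p * Real.log (x / w) ≤ Real.exp (p * Real.log (x / w)) := by
      have := Real.add_one_le_exp (p * Real.log (x / w)); linarith
    have h4 : (x / w) ^ p = Real.exp (p * Real.log (x / w)) := by
      rw [Real.rpow_def_of_pos ht, mul_comm]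
    linarith
  have hwp : 0 < w ^ p := Real.rpow_pos_of_pos hw p
  have h5 : w ^ p * (1 + p * (x / w - 1)) ≤ w ^ p * (x / w) ^ p :=
    mul_le_mul_of_nonneg_left h1 hwp.le
  have h6 : w ^ p * (x / w) ^ p = x ^ p := by
    rw [Real.div_rpow hx.le hw.le]
    field_simp
  have h7 : w ^ p * (1 + p * (x / w - 1)) = w ^ p + p * w ^ (p - 1) * (x - w) := by
    rw [Real.rpow_sub_one hw.ne']
    field_simp
  rw [h6, h7] at h5
  exact h5

/-- `x ↦ x ^ (-τ) - (x + δ) ^ (-τ)` is antitone on `(0, ∞)` for `τ, δ ≥ 0`. -/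
lemma psi_antitone {τ δ : ℝ} (hτ : 0 < τ) (hδ : 0 ≤ δ) {x y : ℝ} (hx : 0 < x) (hxy : x ≤ y) :
    y ^ (-τ) - (y + δ) ^ (-τ) ≤ x ^ (-τ) - (x + δ) ^ (-τ) := by
  set ψ : ℝ → ℝ := fun t => t ^ (-τ) - (t + δ) ^ (-τ) with hψ
  have hderiv : ∀ t ∈ Set.Icc x y, HasDerivAt ψ
      (-τ * t ^ (-τ - 1) - -τ * (t + δ) ^ (-τ - 1)) t := by
    intro t ht
    have ht0 : 0 < t := lt_of_lt_of_le hx ht.1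
    have h1 : HasDerivAt (fun s : ℝ => s ^ (-τ)) (-τ * t ^ (-τ - 1)) t :=
      Real.hasDerivAt_rpow_const (Or.inl ht0.ne')
    have h2 : HasDerivAt (fun s : ℝ => (s + δ) ^ (-τ)) (-τ * (t + δ) ^ (-τ - 1)) t := by
      have h3 : HasDerivAt (fun s : ℝ => s + δ) 1 t := (hasDerivAt_id t).add_const δ
      have h4 : HasDerivAt (fun s : ℝ => s ^ (-τ)) (-τ * (t + δ) ^ (-τ - 1)) (t + δ) :=
        Real.hasDerivAt_rpow_const (Or.inl (by positivity))
      simpa [Function.comp_def] using h4.comp t h3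
    exact h1.sub h2
  have hanti : AntitoneOn ψ (Set.Icc x y) := by
    apply antitoneOn_of_deriv_nonpos (convex_Icc x y)
    · exact continuousOn_of_forall_continuousAt fun t ht =>
        (hderiv t ht).continuousAt
    · intro t ht
      rw [interior_Icc] at ht
      exact (hderiv t (Set.mem_Icc_of_Ioo ht)).differentiableAt.differentiableWithinAt
    · intro t ht
      rw [interior_Icc] at ht
      rw [(hderiv t (Set.mem_Icc_of_Ioo ht)).deriv]
      have ht0 : 0 < t := lt_trans hx ht.1
      have := Real.rpow_le_rpow_of_nonpos ht0 (le_add_of_nonneg_right hδ)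
        (by linarith : -τ - 1 ≤ 0)
      nlinarith
  exact hanti (Set.left_mem_Icc.mpr hxy) (Set.right_mem_Icc.mpr hxy) hxy

/-- Second-order Taylor lower bound for `u ^ (-τ)` around `v`, with `u ≤ v`. -/
lemma rpow_second_order {τ : ℝ} (hτ : 0 < τ) {u v : ℝ} (hu : 0 < u) (huv : u ≤ v) :
    v ^ (-τ) + τ * v ^ (-τ - 1) * (v - u) + τ * (τ + 1) / 2 * v ^ (-τ - 2) * (v - u) ^ 2
      ≤ u ^ (-τ) := by
  have hv : 0 < v := lt_of_lt_of_le hu huv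
  set φ : ℝ → ℝ := fun t => t ^ (-τ) - τ * v ^ (-τ - 1) * (v - t)
      - τ * (τ + 1) / 2 * v ^ (-τ - 2) * (v - t) ^ 2 with hφ
  have hderiv : ∀ t ∈ Set.Icc u v, HasDerivAt φ
      (-τ * t ^ (-τ - 1) - τ * v ^ (-τ - 1) * (0 - 1)
        - τ * (τ + 1) / 2 * v ^ (-τ - 2) * (2 * (v - t) * (0 - 1))) t := by
    intro t ht
    have ht0 : 0 < t := lt_of_lt_of_le hu ht.1
    have h1 : HasDerivAt (fun s : ℝ => s ^ (-τ)) (-τ * t ^ (-τ - 1)) t :=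
      Real.hasDerivAt_rpow_const (Or.inl ht0.ne')
    have h2 : HasDerivAt (fun s : ℝ => v - s) (0 - 1) t :=
      (hasDerivAt_const t v).sub (hasDerivAt_id t)
    have h3 : HasDerivAt (fun s : ℝ => τ * v ^ (-τ - 1) * (v - s))
        (τ * v ^ (-τ - 1) * (0 - 1)) t := h2.const_mul _
    have h4 : HasDerivAt (fun s : ℝ => (v - s) ^ 2) (2 * (v - t) * (0 - 1)) t := by
      simpa [Pi.pow_def] using (h2.pow 2)
    have h5 : HasDerivAt (fun s : ℝ => τ * (τ + 1) / 2 * v ^ (-τ - 2) * (v - s) ^ 2)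
        (τ * (τ + 1) / 2 * v ^ (-τ - 2) * (2 * (v - t) * (0 - 1))) t := h4.const_mul _
    exact (h1.sub h3).sub h5
  have hanti : AntitoneOn φ (Set.Icc u v) := by
    apply antitoneOn_of_deriv_nonpos (convex_Icc u v)
    · exact continuousOn_of_forall_continuousAt fun t ht => (hderiv t ht).continuousAt
    · intro t ht
      rw [interior_Icc] at ht
      exact (hderiv t (Set.mem_Icc_of_Ioo ht)).differentiableAt.differentiableWithinAt
    · intro t ht
      rw [interior_Icc] at ht
      rw [(hderiv t (Set.mem_Icc_of_Ioo ht)).deriv]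
      have ht0 : 0 < t := lt_trans hu ht.1
      -- key: tangent inequality with exponent -(τ+1)
      have hkey := rpow_tangent_le (p := -τ - 1) (by linarith) hv ht0
      have he : -τ - 1 - 1 = -τ - 2 := by ring
      rw [he] at hkey
      nlinarith
  have := hanti (Set.left_mem_Icc.mpr huv) (Set.right_mem_Icc.mpr huv) huv
  simp only [hφ, sub_self] at this
  nlinarith [this]

theorem second_difference_lower_bound (τ : ℝ) (hτ : 0 < τ) :
    ∃ c : ℝ, 0 < c ∧ ∀ a b c' d : ℝ, 0 < a → a ≤ b → a ≤ c' → b ≤ d → c' ≤ d →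
      a + d = b + c' →
      c * ((min (min b c' - a) a) ^ 2 / a ^ (τ + 2))
        ≤ a ^ (-τ) - b ^ (-τ) - c' ^ (-τ) + d ^ (-τ) := by
  refine ⟨τ * (τ + 1) / 2 * 2 ^ (-τ - 2), by positivity, ?_⟩
  intro a b c' d ha hab hac hbd hcd habd
  set m := min (min b c' - a) a with hm
  have hm0 : 0 ≤ m := le_min (sub_nonneg.mpr (le_min hab hac)) ha.le
  have hma : m ≤ a := min_le_right _ _
  have hmb : m ≤ b - a :=
    (min_le_left _ _).trans (sub_le_sub_right (min_le_left b c') a)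
  have hmc : m ≤ c' - a :=
    (min_le_left _ _).trans (sub_le_sub_right (min_le_right b c') a)
  have hd : d = b + c' - a := by linarith
  -- Step A1: shrink b to a + m (and correspondingly d to c' + m)
  have hA1 : (c' + m) ^ (-τ) - d ^ (-τ) ≤ (a + m) ^ (-τ) - b ^ (-τ) := by
    have h := psi_antitone hτ (by linarith : (0:ℝ) ≤ b - (a + m))
      (x := a + m) (y := c' + m) (by linarith) (by linarith)
    have e1 : a + m + (b - (a + m)) = b := by ring
    have e2 : c' + m + (b - (a + m)) = d := by rw [hd]; ring
    rwa [e1, e2] at h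
  -- Step A2: shrink c' to a + m
  have hA2 : c' ^ (-τ) - (c' + m) ^ (-τ) ≤ (a + m) ^ (-τ) - (a + m + m) ^ (-τ) :=
    psi_antitone hτ hm0 (x := a + m) (y := c') (by linarith) (by linarith)
  -- Step B: second-order Taylor bound for a^{-τ} around a + m
  have hB := rpow_second_order hτ ha (v := a + m) (by linarith)
  rw [show a + m - a = m by ring] at hB
  -- Step C: tangent bound for (a + 2m)^{-τ} at a + m
  have hC := rpow_tangent_le (p := -τ) (by linarith) (w := a + m) (x := a + m + m)
    (by linarith) (by linarith)
  rw [show a + m + m - (a + m) = m by ring] at hC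
  -- combine: a^{-τ} - b^{-τ} - c'^{-τ} + d^{-τ} ≥ τ(τ+1)/2 (a+m)^{-τ-2} m²
  have hE : τ * (τ + 1) / 2 * (a + m) ^ (-τ - 2) * m ^ 2
      ≤ a ^ (-τ) - b ^ (-τ) - c' ^ (-τ) + d ^ (-τ) := by linarith
  -- final comparison of (a+m)^{-τ-2} with 2^{-τ-2} a^{-τ-2}
  have h2a : (2 * a) ^ (-τ - 2) ≤ (a + m) ^ (-τ - 2) :=
    Real.rpow_le_rpow_of_nonpos (by positivity) (by linarith) (by linarith)
  have hsplit : (2 * a) ^ (-τ - 2) = 2 ^ (-τ - 2) * a ^ (-τ - 2) :=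
    Real.mul_rpow (by norm_num) ha.le
  have hinv : a ^ (-τ - 2) = (a ^ (τ + 2))⁻¹ := by
    rw [show -τ - 2 = -(τ + 2) by ring, Real.rpow_neg ha.le]
  have hfin : τ * (τ + 1) / 2 * 2 ^ (-τ - 2) * (m ^ 2 / a ^ (τ + 2))
      = τ * (τ + 1) / 2 * (2 * a) ^ (-τ - 2) * m ^ 2 := by
    rw [hsplit, hinv]; ring
  rw [hfin]
  refine le_trans ?_ hE
  have hmono : τ * (τ + 1) / 2 * (2 * a) ^ (-τ - 2) ≤ τ * (τ + 1) / 2 * (a + m) ^ (-τ - 2) := by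
    have hpos : (0:ℝ) ≤ τ * (τ + 1) / 2 := by positivity
    exact mul_le_mul_of_nonneg_left h2a hpos
  exact mul_le_mul_of_nonneg_right hmono (sq_nonneg m)
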